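/- In the Hopf algebra U (with the coproduct Δ determined by ΔK = K⊗K, ΔL = L⊗L, ΔX± = X± ⊗ K⁻¹ + K ⊗ X±, Δθ± = θ± ⊗ L⁻¹ + L ⊗ θ±), define η₊ := −θ₊L⁻¹ and e := v⁻¹K⁻¹(X₊θ₊ − qθ₊X₊)L⁻¹. Then the coproduct of the composite root vector e is Δe = e ⊗ K⁻²L⁻² + v⁻¹(q − q⁻¹)·η₊ ⊗ X₊K⁻¹L⁻² + 1 ⊗ e. -/

import Mathlib

open scoped TensorProduct

namespace DoubleBos

/-- Generators of the algebra `U`: `K, K⁻¹, L, L⁻¹, X₊, X₋, θ₊, θ₋`. -/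
inductive Gen : Type
  | K | Kinv | L | Linv | Xp | Xm | Tp | Tm
  deriving DecidableEq

/-- The generators viewed inside the free algebra. -/
noncomputable abbrev gg (k : Type) [Field k] (x : Gen) : FreeAlgebra k Gen :=
  FreeAlgebra.ι k x

/-- The defining relations of `U` (with `q = v²`, `i² = -1`). -/
inductive Rel (k : Type) [Field k] (v i : k) :
    FreeAlgebra k Gen → FreeAlgebra k Gen → Prop
  | KKinv : Rel k v i (gg k .K * gg k .Kinv) 1
  | KinvK : Rel k v i (gg k .Kinv * gg k .K) 1
  | LLinv : Rel k v i (gg k .L * gg k .Linv) 1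
  | LinvL : Rel k v i (gg k .Linv * gg k .L) 1
  | KL : Rel k v i (gg k .K * gg k .L) (gg k .L * gg k .K)
  | KXp : Rel k v i (gg k .K * gg k .Xp) ((v ^ 2) • (gg k .Xp * gg k .K))
  | KXm : Rel k v i (gg k .K * gg k .Xm) ((v ^ 2)⁻¹ • (gg k .Xm * gg k .K))
  | LXp : Rel k v i (gg k .L * gg k .Xp) (v⁻¹ • (gg k .Xp * gg k .L))
  | LXm : Rel k v i (gg k .L * gg k .Xm) (v • (gg k .Xm * gg k .L))
  | KTp : Rel k v i (gg k .K * gg k .Tp) (v⁻¹ • (gg k .Tp * gg k .K))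
  | KTm : Rel k v i (gg k .K * gg k .Tm) (v • (gg k .Tm * gg k .K))
  | LTp : Rel k v i (gg k .L * gg k .Tp) (i • (gg k .Tp * gg k .L))
  | LTm : Rel k v i (gg k .L * gg k .Tm) ((-i) • (gg k .Tm * gg k .L))
  | XpXm : Rel k v i (gg k .Xp * gg k .Xm - gg k .Xm * gg k .Xp)
      ((v ^ 2 - (v ^ 2)⁻¹)⁻¹ • (gg k .K * gg k .K - gg k .Kinv * gg k .Kinv))
  | TpTm : Rel k v i (gg k .Tp * gg k .Tm - gg k .Tm * gg k .Tp)
      ((v ^ 2 - (v ^ 2)⁻¹)⁻¹ • (gg k .L * gg k .L - gg k .Linv * gg k .Linv))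
  | TpXm : Rel k v i (gg k .Tp * gg k .Xm) (gg k .Xm * gg k .Tp)
  | XpTm : Rel k v i (gg k .Xp * gg k .Tm) (gg k .Tm * gg k .Xp)
  | TpTp : Rel k v i (gg k .Tp * gg k .Tp) 0
  | TmTm : Rel k v i (gg k .Tm * gg k .Tm) 0
  | SerreP : Rel k v i
      ((gg k .Xp * gg k .Tp - (v ^ 2) • (gg k .Tp * gg k .Xp)) * gg k .Xp)
      ((v ^ 2) • (gg k .Xp * (gg k .Xp * gg k .Tp - (v ^ 2) • (gg k .Tp * gg k .Xp))))
  | SerreM : Rel k v i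
      ((gg k .Xm * gg k .Tm - (v ^ 2) • (gg k .Tm * gg k .Xm)) * gg k .Xm)
      ((v ^ 2) • (gg k .Xm * (gg k .Xm * gg k .Tm - (v ^ 2) • (gg k .Tm * gg k .Xm))))

/-- The algebra `U = ℂ_q^{0|2⋆op} ⋊ Ũ_q(su₂) ⋉ ℂ_q^{0|2}`, presented by generators
and relations. -/
abbrev U (k : Type) [Field k] (v i : k) : Type := RingQuot (Rel k v i)

variable (k : Type) [Field k] (v i : k)

/-- The quotient map from the free algebra onto `U`. -/
noncomputable def mkU : FreeAlgebra k Gen →ₐ[k] U k v i :=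
  RingQuot.mkAlgHom k (Rel k v i)

noncomputable def UK : U k v i := mkU k v i (gg k .K)
noncomputable def UKinv : U k v i := mkU k v i (gg k .Kinv)
noncomputable def UL : U k v i := mkU k v i (gg k .L)
noncomputable def ULinv : U k v i := mkU k v i (gg k .Linv)
noncomputable def UXp : U k v i := mkU k v i (gg k .Xp)
noncomputable def UXm : U k v i := mkU k v i (gg k .Xm)
noncomputable def UTp : U k v i := mkU k v i (gg k .Tp)
noncomputable def UTm : U k v i := mkU k v i (gg k .Tm)

/-- `η₊ = -θ₊ L⁻¹`. -/
noncomputable def etaP : U k v i := -(UTp k v i * ULinv k v i)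

/-- `η₋ = L θ₋`. -/
noncomputable def etaM : U k v i := UL k v i * UTm k v i

/-- the composite root vector `e = v⁻¹ K⁻¹ (X₊θ₊ - q θ₊X₊) L⁻¹`. -/
noncomputable def eRoot : U k v i :=
  v⁻¹ • (UKinv k v i * (UXp k v i * UTp k v i - (v ^ 2) • (UTp k v i * UXp k v i)) * ULinv k v i)


section Aux

lemma mk_rel {a b : FreeAlgebra k Gen} (h : Rel k v i a b) :
    mkU k v i a = mkU k v i b :=
  RingQuot.mkAlgHom_rel k h

lemma uKKi : UK k v i * UKinv k v i = 1 := by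
  rw [UK, UKinv, ← map_mul, mk_rel k v i Rel.KKinv, map_one]

lemma uKiK : UKinv k v i * UK k v i = 1 := by
  rw [UK, UKinv, ← map_mul, mk_rel k v i Rel.KinvK, map_one]

lemma uLLi : UL k v i * ULinv k v i = 1 := by
  rw [UL, ULinv, ← map_mul, mk_rel k v i Rel.LLinv, map_one]

lemma uLiL : ULinv k v i * UL k v i = 1 := by
  rw [UL, ULinv, ← map_mul, mk_rel k v i Rel.LinvL, map_one]

lemma uKL : UK k v i * UL k v i = UL k v i * UK k v i := by
  rw [UK, UL, ← map_mul, mk_rel k v i Rel.KL, map_mul]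

lemma uKXp : UK k v i * UXp k v i = (v ^ 2) • (UXp k v i * UK k v i) := by
  rw [UK, UXp, ← map_mul, mk_rel k v i Rel.KXp, map_smul, map_mul]

lemma uLXp : UL k v i * UXp k v i = v⁻¹ • (UXp k v i * UL k v i) := by
  rw [UL, UXp, ← map_mul, mk_rel k v i Rel.LXp, map_smul, map_mul]

lemma uKTp : UK k v i * UTp k v i = v⁻¹ • (UTp k v i * UK k v i) := by
  rw [UK, UTp, ← map_mul, mk_rel k v i Rel.KTp, map_smul, map_mul]

/-- conjugation helper: if `a x = c • (x a)` and `ai` is a two-sided inverse of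
`a`, then `ai x = c⁻¹ • (x ai)`. -/
lemma conjU (c : k) (hc : c ≠ 0) (a ai x : U k v i)
    (h1 : ai * a = 1) (h2 : a * ai = 1) (h : a * x = c • (x * a)) :
    ai * x = c⁻¹ • (x * ai) := by
  have hx : x * a = c⁻¹ • (a * x) := by
    rw [h, smul_smul, inv_mul_cancel₀ hc, one_smul]
  calc ai * x = ai * (x * (a * ai)) := by rw [h2, mul_one]
    _ = ai * ((x * a) * ai) := by rw [mul_assoc]
    _ = ai * ((c⁻¹ • (a * x)) * ai) := by rw [hx]
    _ = c⁻¹ • (ai * (a * (x * ai))) := by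
        rw [smul_mul_assoc, mul_smul_comm, mul_assoc]
    _ = c⁻¹ • (x * ai) := by rw [← mul_assoc, h1, one_mul]

lemma uKiXp (hv : v ≠ 0) :
    UKinv k v i * UXp k v i = (v ^ 2)⁻¹ • (UXp k v i * UKinv k v i) :=
  conjU k v i (v ^ 2) (pow_ne_zero 2 hv) _ _ _ (uKiK k v i) (uKKi k v i)
    (uKXp k v i)

lemma uKiTp (hv : v ≠ 0) :
    UKinv k v i * UTp k v i = v • (UTp k v i * UKinv k v i) := by
  have := conjU k v i v⁻¹ (inv_ne_zero hv) _ _ _ (uKiK k v i) (uKKi k v i)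
    (uKTp k v i)
  rwa [inv_inv] at this

lemma uLiXp (hv : v ≠ 0) :
    ULinv k v i * UXp k v i = v • (UXp k v i * ULinv k v i) := by
  have := conjU k v i v⁻¹ (inv_ne_zero hv) _ _ _ (uLiL k v i) (uLLi k v i)
    (uLXp k v i)
  rwa [inv_inv] at this

lemma uLiK : ULinv k v i * UK k v i = UK k v i * ULinv k v i := by
  have := conjU k v i 1 one_ne_zero (UL k v i) (ULinv k v i) (UK k v i)
    (uLiL k v i) (uLLi k v i) (by rw [one_smul, ← uKL])
  rwa [inv_one, one_smul] at this

lemma uLiKi : ULinv k v i * UKinv k v i = UKinv k v i * ULinv k v i := by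
  have := conjU k v i 1 one_ne_zero (UK k v i) (UKinv k v i) (ULinv k v i)
    (uKiK k v i) (uKKi k v i) (by rw [one_smul, uLiK])
  rw [inv_one, one_smul] at this
  exact this.symm

lemma deltaW (hv : v ≠ 0) (Δ : U k v i →ₐ[k] U k v i ⊗[k] U k v i)
    (hXp : Δ (UXp k v i) = UXp k v i ⊗ₜ[k] UKinv k v i + UK k v i ⊗ₜ[k] UXp k v i)
    (hTp : Δ (UTp k v i) = UTp k v i ⊗ₜ[k] ULinv k v i + UL k v i ⊗ₜ[k] UTp k v i) :
    Δ (UXp k v i * UTp k v i - (v ^ 2) • (UTp k v i * UXp k v i)) =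
      (UXp k v i * UTp k v i - (v ^ 2) • (UTp k v i * UXp k v i)) ⊗ₜ[k]
          (UKinv k v i * ULinv k v i)
        + (v⁻¹ - v ^ 3) •
          ((UTp k v i * UK k v i) ⊗ₜ[k] (UXp k v i * ULinv k v i))
        + (UK k v i * UL k v i) ⊗ₜ[k]
          (UXp k v i * UTp k v i - (v ^ 2) • (UTp k v i * UXp k v i)) := by
  rw [map_sub, map_smul, map_mul, map_mul, hXp, hTp]
  simp only [add_mul, mul_add, Algebra.TensorProduct.tmul_mul_tmul]
  rw [uKTp k v i, uKiTp k v i hv, uLXp k v i, uLiXp k v i hv, uLiKi k v i,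
    ← uKL k v i]
  simp only [TensorProduct.sub_tmul, TensorProduct.tmul_sub,
    TensorProduct.add_tmul, TensorProduct.tmul_add, ← TensorProduct.smul_tmul',
    TensorProduct.tmul_smul, smul_smul, smul_sub, smul_add]
  simp only [sub_eq_add_neg, ← neg_one_smul k (_ ⊗ₜ[k] _), smul_add, smul_smul]
  match_scalars <;> (try ring1) <;> (field_simp; ring_nf)

end Aux

/-- in the Hopf algebra `U`, with coproduct `Δ` determined by its
stated values on the generators, the coproduct of the composite root vector
`e = v⁻¹K⁻¹(X₊θ₊ - qθ₊X₊)L⁻¹` is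
`Δe = e ⊗ K⁻²L⁻² + v⁻¹(q - q⁻¹)·η₊ ⊗ X₊K⁻¹L⁻² + 1 ⊗ e`. -/
theorem comul_eRoot (k : Type) [Field k] (v i : k)
    (hv : v ≠ 0) (hq : v ^ 2 - (v ^ 2)⁻¹ ≠ 0) (hq2 : (v ^ 2) ^ 2 + 1 ≠ 0)
    (hi : i ^ 2 = -1)
    (Δ : U k v i →ₐ[k] U k v i ⊗[k] U k v i)
    (hK : Δ (UK k v i) = UK k v i ⊗ₜ[k] UK k v i)
    (hKinv : Δ (UKinv k v i) = UKinv k v i ⊗ₜ[k] UKinv k v i)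
    (hL : Δ (UL k v i) = UL k v i ⊗ₜ[k] UL k v i)
    (hLinv : Δ (ULinv k v i) = ULinv k v i ⊗ₜ[k] ULinv k v i)
    (hXp : Δ (UXp k v i) = UXp k v i ⊗ₜ[k] UKinv k v i + UK k v i ⊗ₜ[k] UXp k v i)
    (hXm : Δ (UXm k v i) = UXm k v i ⊗ₜ[k] UKinv k v i + UK k v i ⊗ₜ[k] UXm k v i)
    (hTp : Δ (UTp k v i) = UTp k v i ⊗ₜ[k] ULinv k v i + UL k v i ⊗ₜ[k] UTp k v i)
    (hTm : Δ (UTm k v i) = UTm k v i ⊗ₜ[k] ULinv k v i + UL k v i ⊗ₜ[k] UTm k v i) :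
    Δ (eRoot k v i) =
      eRoot k v i ⊗ₜ[k]
          (UKinv k v i * UKinv k v i * ULinv k v i * ULinv k v i) +
        (v⁻¹ * (v ^ 2 - (v ^ 2)⁻¹)) •
          (etaP k v i ⊗ₜ[k]
            (UXp k v i * UKinv k v i * ULinv k v i * ULinv k v i)) +
        1 ⊗ₜ[k] eRoot k v i := by
  have hW := deltaW k v i hv Δ hXp hTp
  rw [eRoot, map_smul, map_mul, map_mul, hKinv, hLinv, hW]
  simp only [mul_add, add_mul, Algebra.TensorProduct.tmul_mul_tmul,
    smul_mul_assoc, mul_smul_comm]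
  have h1 : UKinv k v i * (UKinv k v i * ULinv k v i) * ULinv k v i =
      UKinv k v i * UKinv k v i * ULinv k v i * ULinv k v i := by
    rw [← mul_assoc]
  have h2 : UKinv k v i * (UTp k v i * UK k v i) * ULinv k v i =
      v • (UTp k v i * ULinv k v i) := by
    rw [← mul_assoc, uKiTp k v i hv, smul_mul_assoc, smul_mul_assoc,
      mul_assoc (UTp k v i), uKiK, mul_one]
  have h3 : UKinv k v i * (UXp k v i * ULinv k v i) * ULinv k v i =
      (v ^ 2)⁻¹ • (UXp k v i * UKinv k v i * ULinv k v i * ULinv k v i) := by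
    rw [← mul_assoc, uKiXp k v i hv, smul_mul_assoc, smul_mul_assoc]
  have h4 : UKinv k v i * (UK k v i * UL k v i) * ULinv k v i = 1 := by
    rw [← mul_assoc, uKiK, one_mul, uLLi]
  rw [h1, h2, h3, h4, etaP]
  rw [show -(UTp k v i * ULinv k v i) = (-1 : k) • (UTp k v i * ULinv k v i) from
    (neg_one_smul k _).symm]
  simp only [← TensorProduct.smul_tmul', TensorProduct.tmul_smul, smul_smul,
    smul_add, TensorProduct.neg_tmul, smul_neg]
  match_scalars <;> (try ring1) <;> (field_simp; ring_nf)

end DoubleBos
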